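/- Let c : ℝ^n → ℝ^{ñ} be differentiable at x⁺ and d : ℝ^n×ℝ^m → ℝ^{m̃} be differentiable in x at (x⁺,y⁺). Fix ρ > 0, Λ > 0, θ_a > 0, δ_c > 0, L_F > 0, L_d > 0, ε ≥ 0, λx ∈ ℝ^{ñ} with λx ≥ 0 and ‖λx‖ ≤ Λ ≤ ρ·θ_a, and λy ∈ ℝ^{m̃} with λy ≥ 0, and set λ̃ = [λx + ρ c(x⁺)]_+. Suppose: (a) there exists v ∈ ℝ^n with ‖v‖ = 1 and ⟨v, ∇c_i(x⁺)⟩ ≤ −δ_c for every index i with c_i(x⁺) ≥ −θ_a; (b) there exists s ∈ ℝ^n with ‖s‖ ≤ L_F and ‖s + Σ_i λ̃_i ∇c_i(x⁺) − Σ_j (λy)_j ∇_x d_j(x⁺,y⁺)‖ ≤ ε; (c) ‖Σ_j (λy)_j ∇_x d_j(x⁺,y⁺)‖ ≤ L_d ‖λy‖. Then δ_c·‖λ̃‖₁ ≤ L_F + L_d‖λy‖ + ε, and consequently ‖[c(x⁺)]_+‖ ≤ ρ^{-1}‖λ̃‖ ≤ ρ^{-1}δ_c^{-1}(L_F + L_d‖λy‖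 + ε). -/

import Mathlib

/-- Componentwise positive part `[v]₊` of a vector. -/
noncomputable def posPart {k : ℕ} (v : EuclideanSpace ℝ (Fin k)) : EuclideanSpace ℝ (Fin k) :=
  WithLp.toLp 2 (fun i => max (v i) 0)

lemma abs_apply_le_norm {k : ℕ} (w : EuclideanSpace ℝ (Fin k)) (i : Fin k) : |w i| ≤ ‖w‖ := by
  rw [EuclideanSpace.norm_eq]
  have h1 : |w i| = Real.sqrt (‖w i‖ ^ 2) := by
    rw [Real.sqrt_sq_eq_abs]; simp [Real.norm_eq_abs]
  rw [h1]
  apply Real.sqrt_le_sqrt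
  exact Finset.single_le_sum (f := fun j => ‖w j‖ ^ 2) (fun j _ => sq_nonneg _)
    (Finset.mem_univ i)

lemma norm_le_sum_abs {k : ℕ} (w : EuclideanSpace ℝ (Fin k)) : ‖w‖ ≤ ∑ i, |w i| := by
  rw [EuclideanSpace.norm_eq]
  have h : ∑ i, ‖w i‖ ^ 2 ≤ (∑ i, |w i|) ^ 2 := by
    simp only [Real.norm_eq_abs]
    exact Finset.sum_sq_le_sq_sum_of_nonneg (fun i _ => abs_nonneg _)
  calc Real.sqrt (∑ i, ‖w i‖ ^ 2) ≤ Real.sqrt ((∑ i, |w i|) ^ 2) := Real.sqrt_le_sqrt h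
    _ = ∑ i, |w i| := Real.sqrt_sq (Finset.sum_nonneg fun i _ => abs_nonneg _)

lemma norm_le_norm_of_abs_le {k : ℕ} (a b : EuclideanSpace ℝ (Fin k))
    (h : ∀ i, |a i| ≤ |b i|) : ‖a‖ ≤ ‖b‖ := by
  rw [EuclideanSpace.norm_eq, EuclideanSpace.norm_eq]
  apply Real.sqrt_le_sqrt
  apply Finset.sum_le_sum
  intro i _
  simp only [Real.norm_eq_abs]
  exact pow_le_pow_left₀ (abs_nonneg _) (h i) 2

/-- Bound on the outer multiplier `λ̃ = [λx + ρ c(x⁺)]₊` and on the outer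
constraint violation `‖[c(x⁺)]₊‖` at an approximate stationary point of the augmented
Lagrangian subproblem, under the generalized MFCQ at `x⁺`. -/
theorem outer_multiplier_bound {n m nt mt : ℕ}
    (c : EuclideanSpace ℝ (Fin n) → EuclideanSpace ℝ (Fin nt))
    (gc : Fin nt → EuclideanSpace ℝ (Fin n))
    (xp : EuclideanSpace ℝ (Fin n))
    (hgc : ∀ i, HasGradientAt (fun x => c x i) (gc i) xp)
    (d : EuclideanSpace ℝ (Fin n) → EuclideanSpace ℝ (Fin m) → EuclideanSpace ℝ (Fin mt))
    (gd : Fin mt → EuclideanSpace ℝ (Fin n))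
    (yp : EuclideanSpace ℝ (Fin m))
    (hgd : ∀ j, HasGradientAt (fun x => d x yp j) (gd j) xp)
    (ρ Λ θa δc LF Ld ε : ℝ)
    (hρ : 0 < ρ) (hΛ : 0 < Λ) (hθa : 0 < θa) (hδc : 0 < δc)
    (hLF : 0 < LF) (hLd : 0 < Ld) (hε : 0 ≤ ε)
    (lx : EuclideanSpace ℝ (Fin nt)) (hlx : ∀ i, 0 ≤ lx i)
    (hlxΛ : ‖lx‖ ≤ Λ) (hΛθ : Λ ≤ ρ * θa)
    (ly : EuclideanSpace ℝ (Fin mt)) (hly : ∀ j, 0 ≤ ly j)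
    -- (a) generalized MFCQ direction at x⁺
    (v : EuclideanSpace ℝ (Fin n)) (hv : ‖v‖ = 1)
    (hmfcq : ∀ i, -θa ≤ c xp i → @inner ℝ _ _ v (gc i) ≤ -δc)
    -- (b) approximate stationarity
    (s : EuclideanSpace ℝ (Fin n)) (hsn : ‖s‖ ≤ LF)
    (hstat : ‖s + (∑ i, (posPart (lx + ρ • c xp) i) • gc i) - ∑ j, ly j • gd j‖ ≤ ε)
    -- (c) bound on the inner-constraint gradient combination
    (hdbnd : ‖∑ j, ly j • gd j‖ ≤ Ld * ‖ly‖) :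
    δc * (∑ i, |posPart (lx + ρ • c xp) i|) ≤ LF + Ld * ‖ly‖ + ε
    ∧ ‖posPart (c xp)‖ ≤ ρ⁻¹ * ‖posPart (lx + ρ • c xp)‖
    ∧ ρ⁻¹ * ‖posPart (lx + ρ • c xp)‖ ≤ ρ⁻¹ * δc⁻¹ * (LF + Ld * ‖ly‖ + ε) := by
  set lt : EuclideanSpace ℝ (Fin nt) := posPart (lx + ρ • c xp) with hlt
  have hlt_nonneg : ∀ i, 0 ≤ lt i := fun i => le_max_right _ _
  have hlt_app : ∀ i, lt i = max (lx i + ρ * c xp i) 0 := fun i => rfl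
  set W := s + (∑ i, lt i • gc i) - ∑ j, ly j • gd j with hW
  -- per-term bound
  have hterm : ∀ i, lt i * (@inner ℝ _ _ v (gc i)) ≤ -δc * lt i := by
    intro i
    rcases eq_or_lt_of_le (hlt_nonneg i) with h0 | h0
    · simp [← h0]
    · have hpos : 0 < lx i + ρ * c xp i := by
        by_contra hcon
        push_neg at hcon
        have hz : lt i = 0 := by rw [hlt_app i]; exact max_eq_right hcon
        rw [hz] at h0; exact lt_irrefl 0 h0
      have hlxi : lx i ≤ Λ := le_trans (le_trans (le_abs_self _) (abs_apply_le_norm lx i)) hlxΛ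
      have hcxp : -θa ≤ c xp i := by nlinarith
      have := hmfcq i hcxp
      nlinarith
  -- inner product expansion
  have hinner : (@inner ℝ _ _ v W) =
      (@inner ℝ _ _ v s) + (∑ i, lt i * (@inner ℝ _ _ v (gc i)))
        - (@inner ℝ _ _ v (∑ j, ly j • gd j)) := by
    rw [hW, inner_sub_right, inner_add_right, inner_sum]
    simp only [real_inner_smul_right]
  have hsum_le : ∑ i, lt i * (@inner ℝ _ _ v (gc i)) ≤ ∑ i, (-δc * lt i) :=
    Finset.sum_le_sum fun i _ => hterm i
  have habsW : |(@inner ℝ _ _ v W)| ≤ ε := by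
    calc |(@inner ℝ _ _ v W)| ≤ ‖v‖ * ‖W‖ := abs_real_inner_le_norm v W
      _ = ‖W‖ := by rw [hv, one_mul]
      _ ≤ ε := hstat
  have habss : |(@inner ℝ _ _ v s)| ≤ LF := by
    calc |(@inner ℝ _ _ v s)| ≤ ‖v‖ * ‖s‖ := abs_real_inner_le_norm v s
      _ = ‖s‖ := by rw [hv, one_mul]
      _ ≤ LF := hsn
  have habsd : |(@inner ℝ _ _ v (∑ j, ly j • gd j))| ≤ Ld * ‖ly‖ := by
    calc |(@inner ℝ _ _ v (∑ j, ly j • gd j))| ≤ ‖v‖ * ‖∑ j, ly j • gd j‖ :=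
        abs_real_inner_le_norm _ _
      _ = ‖∑ j, ly j • gd j‖ := by rw [hv, one_mul]
      _ ≤ Ld * ‖ly‖ := hdbnd
  have hsum_neg : ∑ i, (-δc * lt i) = -δc * ∑ i, lt i := by rw [Finset.mul_sum]
  have key : δc * (∑ i, lt i) ≤ LF + Ld * ‖ly‖ + ε := by
    have h1 : ∑ i, lt i * (@inner ℝ _ _ v (gc i)) =
        (@inner ℝ _ _ v W) - (@inner ℝ _ _ v s) + (@inner ℝ _ _ v (∑ j, ly j • gd j)) := by
      rw [hinner]; ring
    rw [h1, hsum_neg] at hsum_le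
    have hW' := abs_le.mp habsW
    have hs' := abs_le.mp habss
    have hd' := abs_le.mp habsd
    nlinarith [hW'.1, hW'.2, hs'.1, hs'.2, hd'.1, hd'.2]
  have habs_eq : (∑ i, |lt i|) = ∑ i, lt i :=
    Finset.sum_congr rfl fun i _ => abs_of_nonneg (hlt_nonneg i)
  have part1 : δc * (∑ i, |lt i|) ≤ LF + Ld * ‖ly‖ + ε := by rw [habs_eq]; exact key
  have part2 : ‖posPart (c xp)‖ ≤ ρ⁻¹ * ‖lt‖ := by
    have h : ‖posPart (c xp)‖ ≤ ‖ρ⁻¹ • lt‖ := by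
      apply norm_le_norm_of_abs_le
      intro i
      have hp : posPart (c xp) i = max (c xp i) 0 := rfl
      have hsmul : (ρ⁻¹ • lt) i = ρ⁻¹ * lt i := rfl
      rw [hp, hsmul, abs_of_nonneg (le_max_right _ _),
        abs_of_nonneg (mul_nonneg (inv_nonneg.mpr hρ.le) (hlt_nonneg i))]
      rcases le_or_gt (c xp i) 0 with hc | hc
      · rw [max_eq_right hc]
        exact mul_nonneg (inv_nonneg.mpr hρ.le) (hlt_nonneg i)
      · rw [max_eq_left hc.le]
        have h2 : lx i + ρ * c xp i ≤ lt i := by rw [hlt_app i]; exact le_max_left _ _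
        have h3 : ρ * c xp i ≤ lt i := by linarith [hlx i]
        calc c xp i = ρ⁻¹ * (ρ * c xp i) := by field_simp
          _ ≤ ρ⁻¹ * lt i := by
            apply mul_le_mul_of_nonneg_left h3 (inv_nonneg.mpr hρ.le)
    calc ‖posPart (c xp)‖ ≤ ‖ρ⁻¹ • lt‖ := h
      _ = ρ⁻¹ * ‖lt‖ := by
        rw [norm_smul, Real.norm_eq_abs, abs_of_nonneg (inv_nonneg.mpr hρ.le)]
  have part3 : ρ⁻¹ * ‖lt‖ ≤ ρ⁻¹ * δc⁻¹ * (LF + Ld * ‖ly‖ + ε) := by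
    have h1 : ‖lt‖ ≤ ∑ i, |lt i| := norm_le_sum_abs lt
    have h2 : ∑ i, |lt i| ≤ δc⁻¹ * (LF + Ld * ‖ly‖ + ε) := by
      rw [inv_mul_eq_div]
      exact (le_div_iff₀' hδc).mpr part1
    have h3 : ‖lt‖ ≤ δc⁻¹ * (LF + Ld * ‖ly‖ + ε) := le_trans h1 h2
    rw [mul_assoc]
    exact mul_le_mul_of_nonneg_left h3 (inv_nonneg.mpr hρ.le)
  exact ⟨part1, part2, part3⟩
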